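/- Let G = {z ∈ ℂ : 0 < |z| < 1} be the punctured open unit disc, E = {z ∈ ℂ : |z| = 1/2} and F = {z ∈ ℂ : |z| = 1/4}. Then E and F are disjoint Arakeljan sets in G, the open annulus A = {z ∈ ℂ : 1/4 < |z| < 1/2} is a G-hole of E ∪ F, and consequently E ∪ F is not an Arakeljan set in G. -/

import Mathlib

open Set Metric

open Topology Filter

/-- A Jordan curve: the image of a continuous injective map from the unit circle into ℂ. -/
def IsJordanCurve (J : Set ℂ) : Prop :=
  ∃ f : ℂ → ℂ, ContinuousOn f (sphere (0 : ℂ) 1) ∧ Set.InjOn f (sphere (0 : ℂ) 1) ∧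
    J = f '' (sphere (0 : ℂ) 1)

/-- The topological boundary of `K` is a finite union of pairwise disjoint Jordan curves. -/
def JordanBoundary (K : Set ℂ) : Prop :=
  ∃ (n : ℕ) (J : Fin n → Set ℂ), (∀ i, IsJordanCurve (J i)) ∧
    (Pairwise fun i j => Disjoint (J i) (J j)) ∧ frontier K = ⋃ i, J i

/-- `g` is a `G`-hole of `F`: a connected component of `G \ F` contained in some
compact subset of `G`. -/
def IsGHole (G F g : Set ℂ) : Prop :=
  (∃ z ∈ G \ F, g = connectedComponentIn (G \ F) z) ∧
  ∃ L : Set ℂ, IsCompact L ∧ L ⊆ G ∧ g ⊆ L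

/-- `F` is an Arakeljan set in `G`: it has no `G`-holes, and for every connected compact
`K ⊆ G` whose boundary is a finite union of pairwise disjoint Jordan curves, the union of
all `G`-holes of `F ∪ K` is contained in some compact subset of `G`. -/
def IsArakeljan (G F : Set ℂ) : Prop :=
  (∀ g : Set ℂ, ¬ IsGHole G F g) ∧
  ∀ K : Set ℂ, IsCompact K → IsConnected K → K ⊆ G → JordanBoundary K →
    ∃ L : Set ℂ, IsCompact L ∧ L ⊆ G ∧ (⋃ g ∈ {g : Set ℂ | IsGHole G (F ∪ K) g}, g) ⊆ L


/-- Every point of a `G`-hole of a set `S` contained in the annulus `r ≤ |z| ≤ R`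
lies in that annulus itself. -/
lemma hole_mem_annulus {S : Set ℂ} {r R : ℝ}
    (hS : ∀ z ∈ S, r ≤ ‖z‖ ∧ ‖z‖ ≤ R)
    {g : Set ℂ} (hg : IsGHole {z : ℂ | 0 < ‖z‖ ∧ ‖z‖ < 1} S g) :
    ∀ w ∈ g, r ≤ ‖w‖ ∧ ‖w‖ ≤ R := by
  obtain ⟨⟨z₀, hz₀, rfl⟩, L, hLc, hLG, hgL⟩ := hg
  set Gd := {z : ℂ | 0 < ‖z‖ ∧ ‖z‖ < 1} with hGd
  intro w hw
  have hwU : w ∈ Gd \ S := connectedComponentIn_subset _ _ hw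
  have hCL : connectedComponentIn (Gd \ S) w ⊆ L := by
    rw [← connectedComponentIn_eq hw]; exact hgL
  have hw0 : 0 < ‖w‖ := hwU.1.1
  have hw1 : ‖w‖ < 1 := hwU.1.2
  set f : ℝ → ℂ := fun t => (t : ℂ) * w with hf
  have habs : ∀ t : ℝ, 0 ≤ t → ‖(f t)‖ = t * ‖w‖ := by
    intro t ht
    simp [hf, map_mul, Complex.norm_real, Real.norm_eq_abs, abs_of_nonneg ht]
  have hfc : Continuous f := by continuity
  constructor
  · -- r ≤ |w|
    by_contra h
    push_neg at h
    have hsub : f '' Ioc (0 : ℝ) 1 ⊆ Gd \ S := by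
      rintro _ ⟨t, ⟨ht0, ht1⟩, rfl⟩
      have habst : ‖(f t)‖ = t * ‖w‖ := habs t ht0.le
      have h1 : 0 < t * ‖w‖ := mul_pos ht0 hw0
      have h2 : t * ‖w‖ ≤ ‖w‖ := by
        nlinarith
      refine ⟨⟨by rw [habst]; exact h1, by rw [habst]; linarith⟩, ?_⟩
      intro hmem
      have := (hS _ hmem).1
      rw [habst] at this; linarith
    have hpre : IsPreconnected (f '' Ioc (0 : ℝ) 1) :=
      isPreconnected_Ioc.image f hfc.continuousOn
    have hwin : w ∈ f '' Ioc (0 : ℝ) 1 := ⟨1, by constructor <;> norm_num, by simp [hf]⟩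
    have hsubC : f '' Ioc (0 : ℝ) 1 ⊆ connectedComponentIn (Gd \ S) w :=
      hpre.subset_connectedComponentIn hwin hsub
    have h0 : (0 : ℂ) ∈ closure (f '' Ioc (0 : ℝ) 1) := by
      have hT : Filter.Tendsto f (𝓝[>] (0 : ℝ)) (𝓝 (0 : ℂ)) :=
        ((Complex.continuous_ofReal.mul continuous_const).tendsto' 0 0 (by simp [hf])).mono_left
          nhdsWithin_le_nhds
      refine mem_closure_of_tendsto hT ?_
      exact Filter.eventually_of_mem
        (Ioc_mem_nhdsGT_of_mem (⟨le_rfl, by norm_num⟩ : (0:ℝ) ∈ Ico (0:ℝ) 1))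
        (fun t ht => mem_image_of_mem f ht)
    have h0L : (0 : ℂ) ∈ L := closure_minimal (hsubC.trans hCL) hLc.isClosed h0
    have := (hLG h0L).1
    simp at this
  · -- |w| ≤ R
    by_contra h
    push_neg at h
    set a : ℝ := (‖w‖)⁻¹ with ha
    have ha1 : 1 < a := one_lt_inv₀ hw0 |>.mpr hw1
    have haw : a * ‖w‖ = 1 := inv_mul_cancel₀ hw0.ne'
    have hsub : f '' Ico (1 : ℝ) a ⊆ Gd \ S := by
      rintro _ ⟨t, ⟨ht1, hta⟩, rfl⟩
      have ht0 : (0 : ℝ) ≤ t := by linarith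
      have habst : ‖(f t)‖ = t * ‖w‖ := habs t ht0
      have h2 : ‖w‖ ≤ t * ‖w‖ := le_mul_of_one_le_left hw0.le ht1
      have h3 : t * ‖w‖ < 1 := by
        calc t * ‖w‖ < a * ‖w‖ := by nlinarith
        _ = 1 := haw
      refine ⟨⟨by rw [habst]; linarith, by rw [habst]; exact h3⟩, ?_⟩
      intro hmem
      have := (hS _ hmem).2
      rw [habst] at this; linarith
    have hpre : IsPreconnected (f '' Ico (1 : ℝ) a) :=
      isPreconnected_Ico.image f hfc.continuousOn
    have hwin : w ∈ f '' Ico (1 : ℝ) a := ⟨1, ⟨le_rfl, ha1⟩, by simp [hf]⟩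
    have hsubC : f '' Ico (1 : ℝ) a ⊆ connectedComponentIn (Gd \ S) w :=
      hpre.subset_connectedComponentIn hwin hsub
    have hp : f a ∈ closure (f '' Ico (1 : ℝ) a) := by
      have hT : Filter.Tendsto f (𝓝[<] a) (𝓝 (f a)) :=
        ((Complex.continuous_ofReal.mul continuous_const).tendsto' a (f a) rfl).mono_left
          nhdsWithin_le_nhds
      refine mem_closure_of_tendsto hT ?_
      exact Filter.eventually_of_mem (Ico_mem_nhdsLT ha1)
        (fun t ht => mem_image_of_mem f ht)
    have hpL : f a ∈ L := closure_minimal (hsubC.trans hCL) hLc.isClosed hp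
    have : ‖(f a)‖ < 1 := (hLG hpL).2
    rw [habs a (by linarith), haw] at this
    exact lt_irrefl _ this

lemma annulus_compact_subset (r R : ℝ) (hr : 0 < r) (hR : R < 1) :
    IsCompact {z : ℂ | r ≤ ‖z‖ ∧ ‖z‖ ≤ R} ∧
      {z : ℂ | r ≤ ‖z‖ ∧ ‖z‖ ≤ R} ⊆
        {z : ℂ | 0 < ‖z‖ ∧ ‖z‖ < 1} := by
  constructor
  · have hcl : IsClosed {z : ℂ | r ≤ ‖z‖ ∧ ‖z‖ ≤ R} := by
      have : {z : ℂ | r ≤ ‖z‖ ∧ ‖z‖ ≤ R} = (norm : ℂ → ℝ) ⁻¹' Icc r R := by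
        ext z; simp [Icc]
      rw [this]
      exact isClosed_Icc.preimage continuous_norm
    refine (isCompact_closedBall (0 : ℂ) R).of_isClosed_subset hcl ?_
    intro z hz
    simpa [mem_closedBall_zero_iff] using hz.2
  · intro z hz
    exact ⟨lt_of_lt_of_le hr hz.1, lt_of_le_of_lt hz.2 hR⟩

lemma circle_arakeljan (c : ℝ) (hc0 : 0 < c) (hc1 : c < 1) :
    IsArakeljan {z : ℂ | 0 < ‖z‖ ∧ ‖z‖ < 1}
      {z : ℂ | ‖z‖ = c} := by
  constructor
  · intro g hg
    obtain ⟨⟨z₀, hz₀, hgeq⟩, hrest⟩ := hg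
    have hz₀g : z₀ ∈ g := by
      rw [hgeq]; exact mem_connectedComponentIn hz₀
    have := hole_mem_annulus (S := {z : ℂ | ‖z‖ = c}) (r := c) (R := c)
      (fun z hz => ⟨hz.ge, hz.le⟩) ⟨⟨z₀, hz₀, hgeq⟩, hrest⟩ z₀ hz₀g
    exact hz₀.2 (le_antisymm this.2 this.1)
  · intro K hKc hKconn hKG _
    obtain ⟨xr, hxr, hmin⟩ := hKc.exists_isMinOn hKconn.nonempty
      continuous_norm.continuousOn
    obtain ⟨xR, hxR, hmax⟩ := hKc.exists_isMaxOn hKconn.nonempty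
      continuous_norm.continuousOn
    set r : ℝ := min c (‖xr‖) with hrdef
    set R : ℝ := max c (‖xR‖) with hRdef
    have hr0 : 0 < r := lt_min hc0 (hKG hxr).1
    have hR1 : R < 1 := max_lt hc1 (hKG hxR).2
    obtain ⟨hLc, hLG⟩ := annulus_compact_subset r R hr0 hR1
    refine ⟨_, hLc, hLG, ?_⟩
    refine iUnion₂_subset fun g hg => ?_
    refine hole_mem_annulus (S := {z : ℂ | ‖z‖ = c} ∪ K) (r := r) (R := R) ?_ hg
    rintro z (hz | hz)
    · exact ⟨hz ▸ min_le_left _ _, hz ▸ le_max_left _ _⟩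
    · exact ⟨le_trans (min_le_right _ _) (hmin hz), le_trans (hmax hz) (le_max_right _ _)⟩

theorem punctured_disc_counterexample
    (G E F A : Set ℂ)
    (hG : G = {z : ℂ | 0 < ‖z‖ ∧ ‖z‖ < 1})
    (hE : E = {z : ℂ | ‖z‖ = 1 / 2})
    (hF : F = {z : ℂ | ‖z‖ = 1 / 4})
    (hA : A = {z : ℂ | 1 / 4 < ‖z‖ ∧ ‖z‖ < 1 / 2}) :
    Disjoint E F ∧ IsArakeljan G E ∧ IsArakeljan G F ∧
      IsGHole G (E ∪ F) A ∧ ¬ IsArakeljan G (E ∪ F) := by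
  subst hG hE hF hA
  have hhole : IsGHole {z : ℂ | 0 < ‖z‖ ∧ ‖z‖ < 1}
      ({z : ℂ | ‖z‖ = 1 / 2} ∪ {z : ℂ | ‖z‖ = 1 / 4})
      {z : ℂ | 1 / 4 < ‖z‖ ∧ ‖z‖ < 1 / 2} := by
    set Gd := {z : ℂ | 0 < ‖z‖ ∧ ‖z‖ < 1} with hGd
    set EF := {z : ℂ | ‖z‖ = 1 / 2} ∪ {z : ℂ | ‖z‖ = 1 / 4} with hEF
    set A := {z : ℂ | 1 / 4 < ‖z‖ ∧ ‖z‖ < 1 / 2} with hA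
    set z₀ : ℂ := ((3 / 8 : ℝ) : ℂ) with hz₀def
    have habsz₀ : ‖z₀‖ = 3 / 8 := by
      rw [hz₀def, Complex.norm_real, Real.norm_eq_abs]; norm_num
    have hz₀A : z₀ ∈ A := by rw [hA]; constructor <;> rw [habsz₀] <;> norm_num
    have hAsub : A ⊆ Gd \ EF := by
      intro z hz
      obtain ⟨h1, h2⟩ := hz
      refine ⟨⟨by linarith, by linarith⟩, ?_⟩
      rintro (h | h) <;> simp only [mem_setOf_eq] at h <;> linarith
    have hz₀U : z₀ ∈ Gd \ EF := hAsub hz₀A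
    have hApre : IsPreconnected A := by
      have himg : A = (fun p : ℝ × ℝ => (p.1 : ℂ) * Complex.exp ((p.2 : ℂ) * Complex.I)) ''
          (Ioo (1/4 : ℝ) (1/2) ×ˢ (univ : Set ℝ)) := by
        ext z
        constructor
        · intro hz
          exact ⟨(‖z‖, Complex.arg z), ⟨hz, trivial⟩, Complex.norm_mul_exp_arg_mul_I z⟩
        · rintro ⟨⟨t, θ⟩, ⟨⟨ht1, ht2⟩, -⟩, rfl⟩
          have habst : (norm : ℂ → ℝ) ((t : ℂ) * Complex.exp ((θ : ℂ) * Complex.I)) = t := by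
            rw [norm_mul, Complex.norm_exp_ofReal_mul_I, Complex.norm_real,
              Real.norm_of_nonneg (by linarith), mul_one]
          exact ⟨by rw [habst]; exact ht1, by rw [habst]; exact ht2⟩
      have hcont : Continuous
          (fun p : ℝ × ℝ => (p.1 : ℂ) * Complex.exp ((p.2 : ℂ) * Complex.I)) := by
        continuity
      rw [himg]
      exact (isPreconnected_Ioo.prod isPreconnected_univ).image _ hcont.continuousOn
    have h1 : A ⊆ connectedComponentIn (Gd \ EF) z₀ :=
      hApre.subset_connectedComponentIn hz₀A hAsub
    have h2 : connectedComponentIn (Gd \ EF) z₀ ⊆ A := by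
      intro w hw
      have hCsub : connectedComponentIn (Gd \ EF) z₀ ⊆ Gd \ EF := connectedComponentIn_subset _ _
      have hCpre : IsPreconnected (connectedComponentIn (Gd \ EF) z₀) :=
        isPreconnected_connectedComponentIn
      have himgpre : IsPreconnected ((norm : ℂ → ℝ) '' connectedComponentIn (Gd \ EF) z₀) :=
        hCpre.image _ continuous_norm.continuousOn
      have hz₀mem : (3/8 : ℝ) ∈ (norm : ℂ → ℝ) '' connectedComponentIn (Gd \ EF) z₀ :=
        ⟨z₀, mem_connectedComponentIn hz₀U, habsz₀⟩
      have hwmem : ‖w‖ ∈ (norm : ℂ → ℝ) '' connectedComponentIn (Gd \ EF) z₀ :=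
        ⟨w, hw, rfl⟩
      have hnot : ∀ x ∈ (norm : ℂ → ℝ) '' connectedComponentIn (Gd \ EF) z₀,
          x ≠ 1/4 ∧ x ≠ 1/2 := by
        rintro x ⟨u, hu, rfl⟩
        have huEF := (hCsub hu).2
        rw [hEF] at huEF
        simp only [mem_union, mem_setOf_eq, not_or] at huEF
        exact ⟨huEF.2, huEF.1⟩
      constructor
      · by_contra hle
        push_neg at hle
        have hmem : (1/4 : ℝ) ∈ Icc (‖w‖) (3/8 : ℝ) := ⟨hle, by norm_num⟩
        have := himgpre.Icc_subset hwmem hz₀mem hmem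
        exact (hnot _ this).1 rfl
      · by_contra hge
        push_neg at hge
        have hmem : (1/2 : ℝ) ∈ Icc (3/8 : ℝ) (‖w‖) := ⟨by norm_num, hge⟩
        have := himgpre.Icc_subset hz₀mem hwmem hmem
        exact (hnot _ this).2 rfl
    refine ⟨⟨z₀, hz₀U, h1.antisymm h2⟩, ?_⟩
    obtain ⟨hLc, hLG⟩ := annulus_compact_subset (1/4) (1/2) (by norm_num) (by norm_num)
    exact ⟨_, hLc, hLG, fun z hz => ⟨hz.1.le, hz.2.le⟩⟩
  refine ⟨?_, circle_arakeljan (1/2) (by norm_num) (by norm_num),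
    circle_arakeljan (1/4) (by norm_num) (by norm_num), hhole, fun h => h.1 _ hhole⟩
  rw [Set.disjoint_left]
  intro z hz hz'
  simp only [mem_setOf_eq] at hz hz'
  rw [hz] at hz'; norm_num at hz'
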